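/- Let c = t_1 t_2 ⋯ t_{n−1} be any factorization of the long cycle c ∈ S_n into transpositions. Then: (i) for every subset I ⊆ {1,…,n−1} the set {t_i : i ∈ I} has a least upper bound w_I in the poset (NC(S_n), ≤); (ii) the assignment I ↦ w_I is injective and order-preserving (I ⊆ J implies w_I ≤ w_J), with w_∅ = id and w_{{1,…,n−1}} = c; (iii) w_{{1,…,k}} = t_1 t_2 ⋯ t_k for every 1 ≤ k ≤ n−1; (iv) the image {w_I : I ⊆ {1,…,n−1}}, with the order induced from absolute order, is order-isomorphic to the Boolean lattice of all subsets of {1,…,n−1}. -/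

import Mathlib

set_option linter.unusedSectionVars false
set_option maxHeartbeats 1000000


namespace NCPaper

variable {G : Type*} [Group G]

/-- `lenT T w` is the least `k` such that `w` is a product of `k` elements of `T`
(the reflection length with respect to `T`). -/
noncomputable def lenT (T : Set G) (w : G) : ℕ :=
  sInf {k | ∃ l : List G, (∀ t ∈ l, t ∈ T) ∧ l.length = k ∧ l.prod = w}

/-- The absolute order with respect to the generating set `T`. -/
def absLe (T : Set G) (v w : G) : Prop :=
  lenT T w = lenT T v + lenT T (v⁻¹ * w)

/-- Strict absolute order. -/
def absLt (T : Set G) (v w : G) : Prop := absLe T v w ∧ v ≠ w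

/-- The noncrossing partition lattice `NC(W, c)`: the interval `[1, c]` in absolute order. -/
def NC (T : Set G) (c : G) : Set G := {w | absLe T w c}

/-- A maximal chain `(w_0, …, w_k)` in `NC(W, c)`. -/
def IsNCMaxChain (T : Set G) (c : G) {k : ℕ} (w : Fin (k+1) → G) : Prop :=
  w 0 = 1 ∧ w (Fin.last k) = c ∧ (∀ i, w i ∈ NC T c) ∧
  (∀ i : Fin (k+1), lenT T (w i) = i.val) ∧
  ∀ i : Fin k, absLt T (w i.castSucc) (w i.succ)

/-- The Hurwitz graph: vertices are the maximal chains of `NC(W,c)`, and two chains are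
adjacent iff they differ in exactly one entry. -/
def hurwitzGraph (T : Set G) (c : G) (k : ℕ) :
    SimpleGraph {w : Fin (k+1) → G // IsNCMaxChain T c w} where
  Adj a b := ∃! i, a.1 i ≠ b.1 i
  symm := by
    constructor
    rintro a b ⟨i, hi, hu⟩
    exact ⟨i, hi.symm, fun j hj => hu j hj.symm⟩
  loopless := by constructor; rintro a ⟨i, hi, _⟩; exact hi rfl

/-- The set of transpositions (reflections) of the symmetric group `S_n`. -/
def ST (n : ℕ) : Set (Equiv.Perm (Fin n)) := {t | t.IsSwap}

end NCPaper

namespace NCPaper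
open Equiv Equiv.Perm

section Pos
variable {n : ℕ} [NeZero n]

/-- circular position of `x` relative to basepoint `a`. -/
def pos (a x : Fin n) : ℕ := (x - a).val

lemma pos_lt (a x : Fin n) : pos a x < n := (x - a).isLt

lemma pos_self (a : Fin n) : pos a a = 0 := by simp [pos]

lemma pos_eq_zero_iff {a x : Fin n} : pos a x = 0 ↔ x = a := by
  unfold pos
  constructor
  · intro h
    have : (x - a : Fin n) = 0 := Fin.ext (by simpa using h)
    have := sub_eq_zero.mp this
    exact this
  · rintro rfl; simp

lemma pos_add_mod (a b c : Fin n) : pos a c = (pos a b + pos b c) % n := by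
  have h : (c - a : Fin n) = (c - b) + (b - a) := (sub_add_sub_cancel c b a).symm
  rw [pos, h, Fin.val_add, Nat.add_comm]
  rfl

lemma pos_cases (a b c : Fin n) :
    pos a c = pos a b + pos b c ∨ pos a c + n = pos a b + pos b c := by
  have h := pos_add_mod a b c
  have h1 := pos_lt a b
  have h2 := pos_lt b c
  rcases lt_or_ge (pos a b + pos b c) n with hlt | hge
  · left; rw [h, Nat.mod_eq_of_lt hlt]
  · right
    have hx : pos a b + pos b c - n < n := by omega
    rw [h, Nat.mod_eq_sub_mod hge, Nat.mod_eq_of_lt hx]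
    omega

lemma pos_inj {a x y : Fin n} (h : pos a x = pos a y) : x = y := by
  have h2 : (x - a : Fin n) = y - a := Fin.val_injective h
  have := sub_left_injective (G := Fin n) h2
  exact this

lemma pos_ne_zero {a x : Fin n} (h : x ≠ a) : 0 < pos a x := by
  rcases Nat.eq_zero_or_pos (pos a x) with h0 | h0
  · exact absurd (pos_eq_zero_iff.mp h0) h
  · exact h0

end Pos

section Orb
variable {n : ℕ}

open Equiv Equiv.Perm

/-- number of orbits (cycles, including fixed points) of a permutation. -/
noncomputable def orb (w : Perm (Fin n)) : ℕ :=
  Nat.card (Quotient (Equiv.Perm.SameCycle.setoid w))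

lemma orb_one : orb (1 : Perm (Fin n)) = n := by
  have e : Quotient (Equiv.Perm.SameCycle.setoid (1 : Perm (Fin n))) ≃ Fin n := by
    refine ⟨Quotient.lift id (fun a b h => ?_), fun x => Quotient.mk _ x, ?_, ?_⟩
    · exact Equiv.Perm.sameCycle_one.mp h
    · intro q; induction q using Quotient.ind; rfl
    · intro x; rfl
  rw [orb, Nat.card_congr e, Nat.card_eq_fintype_card, Fintype.card_fin]

lemma orb_pos [NeZero n] (w : Perm (Fin n)) : 0 < orb w := by
  have : Nonempty (Quotient (Equiv.Perm.SameCycle.setoid w)) :=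
    ⟨Quotient.mk _ ⟨0, Nat.pos_of_ne_zero (NeZero.ne n)⟩⟩
  exact Nat.card_pos

lemma orb_le (w : Perm (Fin n)) : orb w ≤ n := by
  have h := Nat.card_le_card_of_surjective
    (fun x : Fin n => (Quotient.mk (Equiv.Perm.SameCycle.setoid w) x))
    (fun q => by induction q using Quotient.ind with | _ x => exact ⟨x, rfl⟩)
  simpa [Nat.card_eq_fintype_card, orb] using h

lemma eq_one_of_orb_eq_card {w : Perm (Fin n)} (h : orb w = n) : w = 1 := by
  by_contra hw
  obtain ⟨a, ha⟩ : ∃ a, w a ≠ a := by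
    by_contra hall
    push_neg at hall
    exact hw (Equiv.ext fun x => by simp [hall x])
  letI : DecidableEq (Quotient (Equiv.Perm.SameCycle.setoid w)) := Classical.decEq _
  letI : Fintype (Quotient (Equiv.Perm.SameCycle.setoid w)) := Fintype.ofFinite _
  have hsurj : Function.Surjective
      (fun x : Fin n => (Quotient.mk (Equiv.Perm.SameCycle.setoid w) x)) :=
    fun q => by induction q using Quotient.ind with | _ x => exact ⟨x, rfl⟩
  have hninj : ¬ Function.Injective
      (fun x : Fin n => (Quotient.mk (Equiv.Perm.SameCycle.setoid w) x)) := by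
    intro hinj
    have : (Quotient.mk (Equiv.Perm.SameCycle.setoid w) a) = Quotient.mk _ (w a) :=
      Quotient.sound ⟨1, by simp⟩
    exact ha (hinj this).symm
  have hlt := Fintype.card_lt_of_surjective_not_injective _ hsurj hninj
  rw [Fintype.card_fin] at hlt
  rw [orb, Nat.card_eq_fintype_card] at h
  omega

/-- orbit refinement under pointwise-motion hypothesis. -/
lemma sameCycle_closure {u σ : Perm (Fin n)} (h : ∀ z, u.SameCycle z (σ z)) :
    ∀ {x y}, σ.SameCycle x y → u.SameCycle x y := by
  have hpow : ∀ (k : ℕ) (x), u.SameCycle x ((σ ^ k) x) := by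
    intro k
    induction k with
    | zero => intro x; exact Equiv.Perm.SameCycle.refl u x
    | succ k ih =>
      intro x
      have h1 : ((σ ^ (k+1)) x) = (σ ^ k) (σ x) := by
        rw [pow_succ]
        rfl
      rw [h1]
      exact (h x).trans (ih (σ x))
  intro x y hxy
  obtain ⟨k, hk0, hk1, hk⟩ := hxy.exists_pow_eq''
  rw [← hk]
  exact hpow k x

lemma orb_conj (g w : Perm (Fin n)) : orb (g * w * g⁻¹) = orb w := by
  have e : Quotient (Equiv.Perm.SameCycle.setoid (g * w * g⁻¹)) ≃
      Quotient (Equiv.Perm.SameCycle.setoid w) := by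
    refine ⟨Quotient.lift (fun x => Quotient.mk _ (g⁻¹ x)) (fun a b h => Quotient.sound ?_),
      Quotient.lift (fun x => Quotient.mk _ (g x)) (fun a b h => Quotient.sound ?_), ?_, ?_⟩
    · exact (Equiv.Perm.sameCycle_conj).mp h
    · show Equiv.Perm.SameCycle (g * w * g⁻¹) (g a) (g b)
      rw [Equiv.Perm.sameCycle_conj]
      have h' : w.SameCycle a b := h
      simpa using h'
    · intro q; induction q using Quotient.ind with | _ x => simp
    · intro q; induction q using Quotient.ind with | _ x => simp
  rw [orb, Nat.card_congr e, orb]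

end Orb

section Split
variable {n : ℕ}
open Equiv Equiv.Perm

lemma swapMul_apply (a b : Fin n) (w : Perm (Fin n)) (x : Fin n) :
    (Equiv.swap a b * w) x = Equiv.swap a b (w x) := rfl

lemma swapMul_pow_eq {a b : Fin n} {w : Perm (Fin n)} :
    ∀ (k : ℕ) (x : Fin n), (∀ i, i < k → (w ^ (i+1)) x ≠ a ∧ (w ^ (i+1)) x ≠ b) →
      ((Equiv.swap a b * w) ^ k) x = (w ^ k) x := by
  intro k
  induction k with
  | zero => intro x _; rfl
  | succ k ih =>
    intro x hx
    have h1 : ((Equiv.swap a b * w) ^ (k+1)) x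
        = (Equiv.swap a b * w) (((Equiv.swap a b * w) ^ k) x) := by
      rw [pow_succ']; rfl
    have h2 : ((w) ^ (k+1)) x = w ((w ^ k) x) := by rw [pow_succ']; rfl
    rw [h1, ih x (fun i hi => hx i (Nat.lt_succ_of_lt hi)), swapMul_apply, h2]
    have h3 := hx k (Nat.lt_succ_self k)
    rw [h2] at h3
    exact Equiv.swap_apply_of_ne_of_ne h3.1 h3.2

lemma exists_period (w : Perm (Fin n)) (a : Fin n) : ∃ k, 0 < k ∧ (w ^ k) a = a :=
  ⟨orderOf w, orderOf_pos w, by rw [pow_orderOf_eq_one]; rfl⟩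

lemma pow_fix_mul {w : Perm (Fin n)} {a : Fin n} {m : ℕ} (hm : (w ^ m) a = a) :
    ∀ q, (w ^ (m * q)) a = a := by
  intro q
  induction q with
  | zero => simp
  | succ q ih =>
    have : w ^ (m * (q+1)) = w ^ (m * q) * w ^ m := by rw [← pow_add]; ring_nf
    rw [this]
    show (w ^ (m*q)) ((w ^ m) a) = a
    rw [hm, ih]

lemma pow_mod_period {w : Perm (Fin n)} {a : Fin n} {m : ℕ} (hm : (w ^ m) a = a) (k : ℕ) :
    (w ^ k) a = (w ^ (k % m)) a := by
  rcases Nat.eq_zero_or_pos m with rfl | _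
  · simp
  · conv_lhs => rw [← Nat.mod_add_div k m]
    rw [pow_add]
    show (w ^ (k % m)) ((w ^ (m * (k / m))) a) = _
    rw [pow_fix_mul hm]

/-- Main splitting lemma: multiplying on the left by a transposition whose
endpoints lie in the same cycle increases the number of cycles by one. -/
lemma orb_swap_mul_sameCycle {a b : Fin n} {w : Perm (Fin n)} (hab : a ≠ b)
    (h : w.SameCycle a b) :
    orb (Equiv.swap a b * w) = orb w + 1 ∧ ¬ (Equiv.swap a b * w).SameCycle a b := by
  set w' := Equiv.swap a b * w with hw'
  -- period m of a, first hitting time j of b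
  obtain ⟨i₀, hi₀, _, hib⟩ := h.exists_pow_eq''
  have hjA : ∃ k, 0 < k ∧ (w ^ k) a = b := ⟨i₀, hi₀, hib⟩
  set m := Nat.find (exists_period w a) with hmdef
  obtain ⟨hm0, hmfix⟩ := Nat.find_spec (exists_period w a)
  rw [← hmdef] at hm0 hmfix
  have hmmin : ∀ i, 0 < i → i < m → (w ^ i) a ≠ a := by
    intro i h1 h2 h3
    exact (Nat.find_min (exists_period w a) h2) ⟨h1, h3⟩
  set j := Nat.find hjA with hjdef
  obtain ⟨hj0, hjb⟩ := Nat.find_spec hjA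
  rw [← hjdef] at hj0 hjb
  have hjmin : ∀ i, 0 < i → i < j → (w ^ i) a ≠ b := by
    intro i h1 h2 h3
    exact (Nat.find_min hjA h2) ⟨h1, h3⟩
  have hjm : j < m := by
    by_contra hge
    push_neg at hge
    have hd : (w ^ (j - m)) a = b := by
      have h1 : w ^ j = w ^ (j - m) * w ^ m := by rw [← pow_add]; congr 1; omega
      calc (w ^ (j-m)) a = (w ^ (j-m)) ((w ^ m) a) := by rw [hmfix]
        _ = (w ^ j) a := by rw [h1]; rfl
        _ = b := hjb
    rcases eq_or_lt_of_le hge with heq | hlt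
    · rw [show j - m = 0 by omega] at hd
      exact hab (by simpa using hd)
    · exact hjmin (j - m) (by omega) (by omega) hd
  have hinj : ∀ i i', i < i' → i' < m → (w ^ i) a ≠ (w ^ i') a := by
    intro i i' hii hi'm heq
    have h1 : w ^ i' = w ^ i * w ^ (i' - i) := by rw [← pow_add]; congr 1; omega
    rw [h1] at heq
    have h2 : (w ^ (i' - i)) a = a := (w ^ i).injective heq.symm
    exact hmmin (i' - i) (by omega) (by omega) h2
  -- trajectories
  have hT2 : ∀ i, i < j → ((w') ^ i) a = (w ^ i) a := by
    intro i hi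
    apply swapMul_pow_eq
    intro i' hi'
    constructor
    · exact hmmin (i'+1) (by omega) (by omega)
    · exact hjmin (i'+1) (by omega) (by omega)
  have hT1 : ((w') ^ j) a = a := by
    have hj1 : j - 1 + 1 = j := by omega
    have h1 : (w') ^ j = w' * (w') ^ (j-1) := by
      conv_lhs => rw [← hj1]
      rw [pow_succ']
    rw [h1]
    show w' (((w')^(j-1)) a) = a
    rw [hT2 (j-1) (by omega)]
    have h2 : w ((w ^ (j-1)) a) = b := by
      have : (w ^ j) a = w ((w ^ (j-1)) a) := by
        conv_lhs => rw [← hj1]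
        rw [pow_succ']; rfl
      rw [← this, hjb]
    rw [hw', swapMul_apply, h2, Equiv.swap_apply_right]
  have hT4 : ∀ i, i < m - j → ((w') ^ i) b = (w ^ (j + i)) a := by
    intro i hi
    have htr : ∀ k, (w ^ k) b = (w ^ (j + k)) a := by
      intro k
      rw [← hjb, ← Equiv.Perm.mul_apply, ← pow_add, Nat.add_comm k j]
    have := swapMul_pow_eq (a := a) (b := b) (w := w) i b ?_
    · rw [← hw'] at this
      rw [this, htr]
    · intro i' hi'
      rw [htr]
      constructor
      · exact hmmin (j + (i'+1)) (by omega) (by omega)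
      · intro heq
        rw [← hjb] at heq
        exact hinj j (j + (i'+1)) (by omega) (by omega) heq.symm
  have hT3 : ((w') ^ (m - j)) b = b := by
    have hmj : m - j - 1 + 1 = m - j := by omega
    have h1 : (w') ^ (m - j) = w' * (w') ^ (m - j - 1) := by
      conv_lhs => rw [← hmj]
      rw [pow_succ']
    rw [h1]
    show w' (((w')^(m-j-1)) b) = b
    rw [hT4 (m-j-1) (by omega)]
    have h2 : j + (m - j - 1) = m - 1 := by omega
    rw [h2]
    have h3 : w ((w ^ (m-1)) a) = a := by
      have : (w ^ m) a = w ((w ^ (m-1)) a) := by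
        conv_lhs => rw [show m = (m-1)+1 by omega]
        rw [pow_succ']; rfl
      rw [← this, hmfix]
    rw [hw', swapMul_apply, h3, Equiv.swap_apply_left]
  -- D2
  have hD2 : ¬ (w').SameCycle a b := by
    intro hc
    obtain ⟨k, hk0, _, hk⟩ := hc.exists_pow_eq''
    have h1 : ((w') ^ (k % j)) a = b := by rw [← pow_mod_period hT1 k, hk]
    have h2 : k % j < j := Nat.mod_lt _ hj0
    rw [hT2 _ h2] at h1
    rw [← hjb] at h1
    exact hinj (k % j) j h2 hjm h1
  -- D1
  have hD1 : ∀ x, w.SameCycle a x → (w').SameCycle a x ∨ (w').SameCycle b x := by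
    intro x hx
    obtain ⟨k, hk0, _, hk⟩ := hx.exists_pow_eq''
    have h1 : (w ^ (k % m)) a = x := by rw [← pow_mod_period hmfix k, hk]
    have h2 : k % m < m := Nat.mod_lt _ hm0
    rcases lt_or_ge (k % m) j with h3 | h3
    · left
      exact ⟨((k % m : ℕ) : ℤ), by rw [zpow_natCast, hT2 _ h3, h1]⟩
    · right
      refine ⟨((k % m - j : ℕ) : ℤ), ?_⟩
      rw [zpow_natCast, hT4 (k % m - j) (by omega)]
      rw [show j + (k % m - j) = k % m by omega, h1]
  -- D3
  have hD3 : ∀ {x y}, (w').SameCycle x y → w.SameCycle x y := by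
    apply sameCycle_closure
    intro z
    rw [hw', swapMul_apply]
    rcases eq_or_ne (w z) a with h1 | h1
    · rw [h1, Equiv.swap_apply_left]
      have hza : w.SameCycle z a := ⟨1, by simpa using h1⟩
      exact hza.trans h
    · rcases eq_or_ne (w z) b with h2 | h2
      · rw [h2, Equiv.swap_apply_right]
        have hzb : w.SameCycle z b := ⟨1, by simpa using h2⟩
        exact hzb.trans h.symm
      · rw [Equiv.swap_apply_of_ne_of_ne h1 h2]
        exact ⟨1, by simp⟩

  -- D4
  have hD4 : ∀ {x y}, ¬ w.SameCycle a x → w.SameCycle x y → (w').SameCycle x y := by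
    intro x y hax hxy
    obtain ⟨k, hk0, _, hk⟩ := hxy.exists_pow_eq''
    have := swapMul_pow_eq (a := a) (b := b) (w := w) k x ?_
    · rw [← hw'] at this
      exact ⟨(k : ℕ), by rw [zpow_natCast, this, hk]⟩
    · intro i hi
      have hstep : w.SameCycle x ((w ^ (i+1)) x) := ⟨((i+1 : ℕ) : ℤ), by rw [zpow_natCast]⟩
      constructor
      · intro heq
        rw [heq] at hstep
        exact hax hstep.symm
      · intro heq
        rw [heq] at hstep
        exact hax (h.trans hstep.symm)
  refine ⟨?_, hD2⟩
  classical
  set Sw := Equiv.Perm.SameCycle.setoid w with hSw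
  set Sw' := Equiv.Perm.SameCycle.setoid w' with hSw'
  have e : Quotient Sw' ≃ Option (Quotient Sw) := by
    refine ⟨Quotient.lift
        (fun x => if (w').SameCycle b x then none else some (Quotient.mk Sw x)) ?_,
      fun o => Option.elim o (Quotient.mk Sw' b)
        (Quotient.lift
          (fun x => if w.SameCycle a x then Quotient.mk Sw' a else Quotient.mk Sw' x) ?_),
      ?_, ?_⟩
    · intro x y hxy
      have hxy' : (w').SameCycle x y := hxy
      by_cases hbx : (w').SameCycle b x
      · rw [if_pos hbx, if_pos (hbx.trans hxy')]
      · rw [if_neg hbx, if_neg (fun hby => hbx (hby.trans hxy'.symm))]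
        exact congrArg some (Quotient.sound (hD3 hxy'))
    · intro x y hxy
      have hxy' : w.SameCycle x y := hxy
      by_cases hax : w.SameCycle a x
      · rw [if_pos hax, if_pos (hax.trans hxy')]
      · rw [if_neg hax, if_neg (fun hay => hax (hay.trans hxy'.symm))]
        exact Quotient.sound (hD4 hax hxy')
    · intro q
      induction q using Quotient.ind with | _ x =>
      by_cases hbx : (w').SameCycle b x
      · simp only [Quotient.lift_mk, if_pos hbx, Option.elim]
        exact Quotient.sound hbx
      · simp only [Quotient.lift_mk, if_neg hbx, Option.elim]
        by_cases hax : w.SameCycle a x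
        · rw [if_pos hax]
          rcases hD1 x hax with h1 | h1
          · exact Quotient.sound h1
          · exact absurd h1 hbx
        · rw [if_neg hax]
    · intro o
      match o with
      | none =>
        simp only [Option.elim]
        rw [Quotient.lift_mk, if_pos (Equiv.Perm.SameCycle.refl w' b)]
      | some q =>
        induction q using Quotient.ind with | _ x =>
        simp only [Option.elim]
        by_cases hax : w.SameCycle a x
        · rw [Quotient.lift_mk, if_pos hax, Quotient.lift_mk,
            if_neg (fun hba : (w').SameCycle b a => hD2 hba.symm)]
          exact congrArg some (Quotient.sound hax)
        · rw [Quotient.lift_mk, if_neg hax, Quotient.lift_mk,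
            if_neg (fun hbx : (w').SameCycle b x => hax (h.trans (hD3 hbx)))]
  letI : Fintype (Quotient Sw) := Fintype.ofFinite _
  letI : Fintype (Quotient Sw') := Fintype.ofFinite _
  rw [orb, orb, ← hSw, ← hSw', Nat.card_congr e, Nat.card_eq_fintype_card,
    Nat.card_eq_fintype_card, Fintype.card_option]

end Split

section SwapOrb
variable {n : ℕ}
open Equiv Equiv.Perm

lemma sameCycle_swap_mul_of_not {a b : Fin n} {w : Perm (Fin n)}
    (h : ¬ w.SameCycle a b) : (Equiv.swap a b * w).SameCycle a b := by
  set w' := Equiv.swap a b * w with hw'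
  set m := Nat.find (exists_period w b) with hmdef
  obtain ⟨hm0, hmfix⟩ := Nat.find_spec (exists_period w b)
  rw [← hmdef] at hm0 hmfix
  have hmmin : ∀ i, 0 < i → i < m → (w ^ i) b ≠ b := by
    intro i h1 h2 h3
    exact (Nat.find_min (exists_period w b) h2) ⟨h1, h3⟩
  have hT : ∀ i, i < m → ((w') ^ i) b = (w ^ i) b := by
    intro i hi
    apply swapMul_pow_eq
    intro i' hi'
    constructor
    · intro heq
      have : w.SameCycle b a := ⟨((i'+1 : ℕ) : ℤ), by rw [zpow_natCast, heq]⟩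
      exact h this.symm
    · exact hmmin (i'+1) (by omega) (by omega)
  have h1 : ((w') ^ m) b = a := by
    have hm1 : m - 1 + 1 = m := by omega
    have h2 : (w') ^ m = w' * (w') ^ (m-1) := by
      conv_lhs => rw [← hm1]
      rw [pow_succ']
    rw [h2]
    show w' (((w')^(m-1)) b) = a
    rw [hT (m-1) (by omega)]
    have h3 : w ((w ^ (m-1)) b) = b := by
      have : (w ^ m) b = w ((w ^ (m-1)) b) := by
        conv_lhs => rw [← hm1]
        rw [pow_succ']; rfl
      rw [← this, hmfix]
    rw [hw', swapMul_apply, h3, Equiv.swap_apply_right]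
  have hba : (w').SameCycle b a := ⟨(m : ℤ), by rw [zpow_natCast, h1]⟩
  exact hba.symm

lemma orb_swap_mul_of_not {a b : Fin n} {w : Perm (Fin n)} (hab : a ≠ b)
    (h : ¬ w.SameCycle a b) : orb w = orb (Equiv.swap a b * w) + 1 := by
  have h1 := orb_swap_mul_sameCycle hab (sameCycle_swap_mul_of_not h)
  rw [Equiv.swap_mul_self_mul] at h1
  exact h1.1

lemma orb_mul_swap_eq_orb_swap_mul (w : Perm (Fin n)) (a b : Fin n) :
    orb (w * Equiv.swap a b) = orb (Equiv.swap a b * w) := by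
  have h := orb_conj (Equiv.swap a b) (w * Equiv.swap a b)
  rw [← h]
  congr 1
  have : Equiv.swap a b * (w * Equiv.swap a b) * (Equiv.swap a b)⁻¹ = Equiv.swap a b * w := by
    rw [Equiv.swap_inv]
    rw [mul_assoc, mul_assoc, Equiv.swap_mul_self, mul_one]
  rw [this]

lemma orb_swap (a b : Fin n) (hab : a ≠ b) : orb (Equiv.swap a b) = n - 1 := by
  have h : (Equiv.swap a b : Perm (Fin n)).SameCycle a b := ⟨1, by simp⟩
  have h1 := (orb_swap_mul_sameCycle hab h).1
  rw [Equiv.swap_mul_self] at h1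
  rw [orb_one] at h1
  omega

/-- dichotomy: multiplying by a swap changes `orb` by exactly one. -/
lemma orb_swap_mul_cases {a b : Fin n} {w : Perm (Fin n)} (hab : a ≠ b) :
    (w.SameCycle a b ∧ orb (Equiv.swap a b * w) = orb w + 1) ∨
    (¬ w.SameCycle a b ∧ orb w = orb (Equiv.swap a b * w) + 1) := by
  by_cases h : w.SameCycle a b
  · exact Or.inl ⟨h, (orb_swap_mul_sameCycle hab h).1⟩
  · exact Or.inr ⟨h, orb_swap_mul_of_not hab h⟩

end SwapOrb



section Length
variable {n : ℕ}
open Equiv Equiv.Perm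

lemma exists_word (w : Perm (Fin n)) :
    ∃ l : List (Perm (Fin n)), (∀ τ ∈ l, τ ∈ ST n) ∧ l.length + orb w = n ∧ l.prod = w := by
  have H : ∀ k (w : Perm (Fin n)), n - orb w = k →
      ∃ l : List (Perm (Fin n)), (∀ τ ∈ l, τ ∈ ST n) ∧ l.length + orb w = n ∧ l.prod = w := by
    intro k
    induction k using Nat.strong_induction_on with
    | _ k ih =>
      intro w hk
      by_cases h1 : w = 1
      · refine ⟨[], by simp, ?_, by simp [h1]⟩
        rw [h1, orb_one]; simp
      · obtain ⟨a, ha⟩ : ∃ a, w a ≠ a := by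
          by_contra hall
          push_neg at hall
          exact h1 (Equiv.ext fun x => by simp [hall x])
        set w' := Equiv.swap a (w a) * w with hw'
        have hsc : w.SameCycle a (w a) := ⟨1, by simp⟩
        have horb : orb w' = orb w + 1 := (orb_swap_mul_sameCycle (Ne.symm ha) hsc).1
        have hbound : orb w' ≤ n := orb_le w'
        have hrec : n - orb w' < k := by omega
        obtain ⟨l', hl1, hl2, hl3⟩ := ih _ hrec w' rfl
        refine ⟨Equiv.swap a (w a) :: l', ?_, ?_, ?_⟩
        · intro τ hτ
          rcases List.mem_cons.mp hτ with h2 | h2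
          · rw [h2]; exact ⟨a, w a, Ne.symm ha, rfl⟩
          · exact hl1 τ h2
        · simp only [List.length_cons]
          omega
        · rw [List.prod_cons, hl3, hw', Equiv.swap_mul_self_mul]
  exact H (n - orb w) w rfl

lemma orb_word_lower : ∀ (l : List (Perm (Fin n))), (∀ τ ∈ l, τ ∈ ST n) →
    n ≤ orb l.prod + l.length := by
  intro l
  induction l with
  | nil => intro _; simp [orb_one]
  | cons τ l' ih =>
    intro hmem
    obtain ⟨a, b, hab, hτ⟩ := hmem τ List.mem_cons_self
    have h1 := ih (fun σ hσ => hmem σ (List.mem_cons_of_mem τ hσ))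
    have h2 : orb l'.prod ≤ orb (τ * l'.prod) + 1 := by
      rw [hτ]
      rcases orb_swap_mul_cases (w := l'.prod) hab with ⟨_, hc⟩ | ⟨_, hc⟩
      · omega
      · omega
    rw [List.prod_cons, List.length_cons]
    omega

lemma lenT_orb (w : Perm (Fin n)) : lenT (ST n) w + orb w = n := by
  obtain ⟨l, hl1, hl2, hl3⟩ := exists_word w
  have hne : {k | ∃ l : List (Perm (Fin n)), (∀ t ∈ l, t ∈ ST n) ∧ l.length = k ∧ l.prod = w}.Nonempty :=
    ⟨l.length, l, hl1, rfl, hl3⟩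
  have hmem := Nat.sInf_mem hne
  obtain ⟨l₀, hl₀1, hl₀2, hl₀3⟩ := hmem
  have hlow : n ≤ orb w + lenT (ST n) w := by
    have := orb_word_lower l₀ hl₀1
    rw [hl₀3, hl₀2] at this
    rw [lenT]
    omega
  have hup : lenT (ST n) w ≤ l.length := Nat.sInf_le ⟨l, hl1, rfl, hl3⟩
  rw [lenT]
  rw [lenT] at hlow hup
  omega

lemma lenT_le_length {w : Perm (Fin n)} {l : List (Perm (Fin n))}
    (hl : ∀ τ ∈ l, τ ∈ ST n) (hp : l.prod = w) : lenT (ST n) w ≤ l.length :=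
  Nat.sInf_le ⟨l, hl, rfl, hp⟩

lemma exists_minimal_word (w : Perm (Fin n)) :
    ∃ l : List (Perm (Fin n)), (∀ τ ∈ l, τ ∈ ST n) ∧ l.length = lenT (ST n) w ∧ l.prod = w := by
  obtain ⟨l, hl1, _, hl3⟩ := exists_word w
  have hne : {k | ∃ l : List (Perm (Fin n)), (∀ t ∈ l, t ∈ ST n) ∧ l.length = k ∧ l.prod = w}.Nonempty :=
    ⟨l.length, l, hl1, rfl, hl3⟩
  exact Nat.sInf_mem hne

lemma lenT_triangle (v w : Perm (Fin n)) :
    lenT (ST n) (v * w) ≤ lenT (ST n) v + lenT (ST n) w := by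
  obtain ⟨lv, h1, h2, h3⟩ := exists_minimal_word v
  obtain ⟨lw, g1, g2, g3⟩ := exists_minimal_word w
  have := lenT_le_length (w := v * w) (l := lv ++ lw) ?_ ?_
  · rwa [List.length_append, h2, g2] at this
  · intro τ hτ
    rcases List.mem_append.mp hτ with h | h
    · exact h1 τ h
    · exact g1 τ h
  · rw [List.prod_append, h3, g3]

lemma lenT_one : lenT (ST n) (1 : Perm (Fin n)) = 0 :=
  Nat.le_zero.mp (lenT_le_length (l := []) (by simp) (by simp))

lemma eq_one_of_lenT_eq_zero {w : Perm (Fin n)} (h : lenT (ST n) w = 0) : w = 1 := by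
  have h1 := lenT_orb w
  rw [h] at h1
  exact eq_one_of_orb_eq_card (by omega)

lemma lenT_swap {a b : Fin n} (hab : a ≠ b) : lenT (ST n) (Equiv.swap a b) = 1 := by
  have h1 := lenT_orb (Equiv.swap a b)
  rw [orb_swap a b hab] at h1
  have h2 : 0 < n := a.pos
  have h3 : (Equiv.swap a b : Perm (Fin n)) ≠ 1 := by
    intro h
    have := congrArg (fun σ : Perm (Fin n) => σ a) h
    simp at this
    exact hab this.symm
  have h4 : lenT (ST n) (Equiv.swap a b) ≠ 0 := fun h => h3 (eq_one_of_lenT_eq_zero h)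
  omega

lemma lenT_conj (g w : Perm (Fin n)) : lenT (ST n) (g * w * g⁻¹) = lenT (ST n) w := by
  have h1 := lenT_orb (g * w * g⁻¹)
  have h2 := lenT_orb w
  rw [orb_conj] at h1
  omega

end Length


section AbsLe
variable {n : ℕ}
open Equiv Equiv.Perm

lemma absLe_one (w : Perm (Fin n)) : absLe (ST n) 1 w := by
  unfold absLe
  rw [lenT_one, inv_one, one_mul, zero_add]

lemma absLe_refl (w : Perm (Fin n)) : absLe (ST n) w w := by
  unfold absLe
  rw [inv_mul_cancel, lenT_one]
  omega

lemma absLe_trans {v w x : Perm (Fin n)} (h1 : absLe (ST n) v w) (h2 : absLe (ST n) w x) :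
    absLe (ST n) v x := by
  unfold absLe at *
  have t1 : lenT (ST n) (v⁻¹ * x) ≤ lenT (ST n) (v⁻¹ * w) + lenT (ST n) (w⁻¹ * x) := by
    have := lenT_triangle (v⁻¹ * w) (w⁻¹ * x)
    rwa [show (v⁻¹ * w) * (w⁻¹ * x) = v⁻¹ * x by group] at this
  have t2 : lenT (ST n) x ≤ lenT (ST n) v + lenT (ST n) (v⁻¹ * x) := by
    have := lenT_triangle v (v⁻¹ * x)
    rwa [show v * (v⁻¹ * x) = x by group] at this
  omega

lemma absLe_antisymm {v w : Perm (Fin n)} (h1 : absLe (ST n) v w) (h2 : absLe (ST n) w v) :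
    v = w := by
  unfold absLe at *
  have hz : lenT (ST n) (v⁻¹ * w) = 0 := by omega
  have := eq_one_of_lenT_eq_zero hz
  have h3 : w = v * 1 := by rw [← this]; group
  simp at h3
  exact h3.symm

lemma absLe_swap_iff {a b : Fin n} {w : Perm (Fin n)} (hab : a ≠ b) :
    absLe (ST n) (Equiv.swap a b) w ↔ w.SameCycle a b := by
  unfold absLe
  rw [Equiv.swap_inv, lenT_swap hab]
  have e1 := lenT_orb w
  have e2 := lenT_orb (Equiv.swap a b * w)
  constructor
  · intro h
    rcases orb_swap_mul_cases (w := w) hab with ⟨hsc, _⟩ | ⟨hsc, hc⟩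
    · exact hsc
    · omega
  · intro hsc
    have hc := (orb_swap_mul_sameCycle hab hsc).1
    omega

lemma absLe_mul_swap_right {v : Perm (Fin n)} {a b : Fin n} (hab : a ≠ b)
    (h : lenT (ST n) (v * Equiv.swap a b) = lenT (ST n) v + 1) :
    absLe (ST n) v (v * Equiv.swap a b) := by
  unfold absLe
  rw [show v⁻¹ * (v * Equiv.swap a b) = Equiv.swap a b by group, lenT_swap hab, h]

lemma absLe_mul_swap_left {v : Perm (Fin n)} {a b : Fin n} (hab : a ≠ b)
    (h : lenT (ST n) v = lenT (ST n) (v * Equiv.swap a b) + 1) :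
    absLe (ST n) (v * Equiv.swap a b) v := by
  unfold absLe
  rw [show (v * Equiv.swap a b)⁻¹ * v = Equiv.swap a b by
    rw [mul_inv_rev, Equiv.swap_inv]; group, lenT_swap hab, h]

lemma sameCycle_swap_apply {u : Perm (Fin n)} {a b : Fin n} (hsc : u.SameCycle a b)
    (y : Fin n) : u.SameCycle y (Equiv.swap a b y) := by
  rcases eq_or_ne y a with rfl | h1
  · rw [Equiv.swap_apply_left]; exact hsc
  · rcases eq_or_ne y b with rfl | h2
    · rw [Equiv.swap_apply_right]; exact hsc.symm
    · rw [Equiv.swap_apply_of_ne_of_ne h1 h2]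

lemma sameCycle_prod_refines {u : Perm (Fin n)} {l : List (Perm (Fin n))}
    (hl : ∀ τ ∈ l, ∃ a b, a ≠ b ∧ τ = Equiv.swap a b ∧ u.SameCycle a b) :
    ∀ {x y}, l.prod.SameCycle x y → u.SameCycle x y := by
  apply sameCycle_closure
  intro z
  induction l with
  | nil => exact Equiv.Perm.SameCycle.refl u z
  | cons τ l' ih =>
    rw [List.prod_cons]
    have h1 := ih (fun σ hσ => hl σ (List.mem_cons_of_mem τ hσ))
    obtain ⟨a, b, hab, rfl, hsc⟩ := hl τ List.mem_cons_self
    exact h1.trans (sameCycle_swap_apply hsc _)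

lemma subword_conj {s l : List (Perm (Fin n))} (hsub : s.Sublist l)
    (hl : ∀ τ ∈ l, τ ∈ ST n) :
    ∃ r : List (Perm (Fin n)), (∀ τ ∈ r, τ ∈ ST n) ∧
      s.length + r.length = l.length ∧ l.prod = s.prod * r.prod := by
  induction hsub with
  | slnil => exact ⟨[], by simp, by simp, by simp⟩
  | @cons s l₁ a hsub ih =>
    obtain ⟨r₁, hr1, hr2, hr3⟩ := ih (fun τ hτ => hl τ (List.mem_cons_of_mem a hτ))
    refine ⟨(s.prod⁻¹ * a * s.prod) :: r₁, ?_, ?_, ?_⟩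
    · intro τ hτ
      rcases List.mem_cons.mp hτ with h2 | h2
      · obtain ⟨x, y, hxy, hswap⟩ := hl a List.mem_cons_self
        rw [h2, hswap]
        refine ⟨s.prod⁻¹ x, s.prod⁻¹ y, fun hh => hxy (by
          have := congrArg (s.prod) hh
          simpa using this), ?_⟩
        rw [Equiv.swap_apply_apply, inv_inv]
      · exact hr1 τ h2
    · simp only [List.length_cons]
      omega
    · rw [List.prod_cons, hr3, List.prod_cons]
      group
  | @cons_cons s l₁ a hsub ih =>
    obtain ⟨r₁, hr1, hr2, hr3⟩ := ih (fun τ hτ => hl τ (List.mem_cons_of_mem a hτ))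
    refine ⟨r₁, hr1, ?_, ?_⟩
    · simp only [List.length_cons]
      omega
    · rw [List.prod_cons, hr3, List.prod_cons]
      group

lemma sub_absLe {s l : List (Perm (Fin n))} (hl : ∀ τ ∈ l, τ ∈ ST n)
    (hlen : lenT (ST n) l.prod = l.length) (hsub : s.Sublist l) :
    lenT (ST n) s.prod = s.length ∧ absLe (ST n) s.prod l.prod := by
  obtain ⟨r, hr1, hr2, hr3⟩ := subword_conj hsub hl
  have hs1 : lenT (ST n) s.prod ≤ s.length :=
    lenT_le_length (fun τ hτ => hl τ (hsub.mem hτ)) rfl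
  have hr4 : lenT (ST n) r.prod ≤ r.length := lenT_le_length hr1 rfl
  have htri : lenT (ST n) l.prod ≤ lenT (ST n) s.prod + lenT (ST n) r.prod := by
    rw [hr3]; exact lenT_triangle _ _
  have heq : s.prod⁻¹ * l.prod = r.prod := by rw [hr3]; group
  refine ⟨by omega, ?_⟩
  unfold absLe
  rw [heq]
  omega

end AbsLe


section Structure
variable {n : ℕ}
open Equiv Equiv.Perm

/-- `w` is aligned: each point moves to the circularly-next element of its orbit. -/
def Aligned (w : Perm (Fin n)) : Prop :=
  ∀ x y, w.SameCycle x y → y ≠ x → 0 < pos x (w x) ∧ pos x (w x) ≤ pos x y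

/-- the orbits of `w` are noncrossing. -/
def Noncross (w : Perm (Fin n)) : Prop :=
  ∀ a b x y, w.SameCycle a b → w.SameCycle x y →
    0 < pos a x → pos a x < pos a b → pos a b < pos a y → w.SameCycle a x

def inU1 (v' : Perm (Fin n)) (p q x : Fin n) : Prop :=
  v'.SameCycle p x ∧ 0 < pos p x ∧ pos p x ≤ pos p q

def inU2 (v' : Perm (Fin n)) (p q x : Fin n) : Prop :=
  v'.SameCycle p x ∧ ¬(0 < pos p x ∧ pos p x ≤ pos p q)

variable [NeZero n] {v' : Perm (Fin n)} {p q : Fin n}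

lemma vmul_p : (v' * Equiv.swap p q) p = v' q := by simp
lemma vmul_q : (v' * Equiv.swap p q) q = v' p := by simp
lemma vmul_other {x : Fin n} (h1 : x ≠ p) (h2 : x ≠ q) :
    (v' * Equiv.swap p q) x = v' x := by
  simp [Equiv.swap_apply_of_ne_of_ne h1 h2]

lemma split_refines (hsc : v'.SameCycle p q) :
    ∀ {x y}, (v' * Equiv.swap p q).SameCycle x y → v'.SameCycle x y := by
  apply sameCycle_closure
  intro z
  rcases eq_or_ne z p with rfl | h1
  · rw [vmul_p]
    exact hsc.trans ⟨1, by simp⟩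
  · rcases eq_or_ne z q with rfl | h2
    · rw [vmul_q]
      exact hsc.symm.trans ⟨1, by simp⟩
    · rw [vmul_other h1 h2]
      exact ⟨1, by simp⟩

lemma invariant_orbit {v : Perm (Fin n)} {P : Fin n → Prop} (hP : ∀ x, P x → P (v x)) :
    ∀ {x y}, P x → v.SameCycle x y → P y := by
  have aux : ∀ (k : ℕ) x, P x → P ((v ^ k) x) := by
    intro k
    induction k with
    | zero => intro x hx; exact hx
    | succ k ih =>
      intro x hx
      have h1 : ((v ^ (k+1)) x) = (v ^ k) (v x) := by rw [pow_succ]; rfl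
      rw [h1]
      exact ih (v x) (hP x hx)
  intro x y hx hxy
  obtain ⟨k, _, _, hk⟩ := hxy.exists_pow_eq''
  rw [← hk]
  exact aux k x hx

lemma q_inU1 (hpq : p ≠ q) (hsc : v'.SameCycle p q) : inU1 v' p q q :=
  ⟨hsc, pos_ne_zero hpq.symm, le_refl _⟩

lemma p_inU2 (hsc : v'.SameCycle p q) : inU2 v' p q p :=
  ⟨Equiv.Perm.SameCycle.refl v' p, by rw [pos_self]; omega⟩

lemma split_U1_inv (hpq : p ≠ q) (hsc : v'.SameCycle p q) (hA : Aligned v') :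
    ∀ x, inU1 v' p q x → inU1 v' p q ((v' * Equiv.swap p q) x) := by
  rintro x ⟨hx1, hx2, hx3⟩
  have hxp : x ≠ p := fun h => by rw [h, pos_self] at hx2; omega
  rcases eq_or_ne q x with rfl | hxq0
  · rw [vmul_q]
    have h4 := hA p q hsc hpq.symm
    exact ⟨⟨1, by simp⟩, h4.1, h4.2⟩
  · rw [vmul_other hxp (Ne.symm hxq0)]
    have hne : pos p x ≠ pos p q := fun h => (Ne.symm hxq0) (pos_inj h)
    have h4 := hA x q (hx1.symm.trans hsc) hxq0
    have d1 := pos_cases p x q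
    have d2 := pos_cases p x (v' x)
    have b1 := pos_lt p (v' x)
    have b2 := pos_lt x q
    have b3 := pos_lt x (v' x)
    have b4 := pos_lt p q
    refine ⟨hx1.trans ⟨1, by simp⟩, ?_, ?_⟩ <;> omega

lemma split_U2_inv (hpq : p ≠ q) (hsc : v'.SameCycle p q) (hA : Aligned v') :
    ∀ x, inU2 v' p q x → inU2 v' p q ((v' * Equiv.swap p q) x) := by
  rintro x ⟨hx1, hx2⟩
  have hsum : pos p q + pos q p = n := by
    have := pos_cases p q p
    rw [pos_self] at this
    have b1 := pos_ne_zero hpq.symm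
    have b2 := pos_ne_zero hpq
    omega
  rcases eq_or_ne p x with rfl | hxp0
  · rw [vmul_p]
    rcases eq_or_ne (v' q) p with hq | hq
    · rw [hq]
      exact p_inU2 hsc
    · have h4 := hA q p hsc.symm hpq
      have hne0 : 0 < pos p (v' q) := pos_ne_zero hq
      have d1 := pos_cases p q (v' q)
      have b1 := pos_lt p (v' q)
      have b2 := pos_lt q (v' q)
      refine ⟨hsc.trans ⟨1, by simp⟩, ?_⟩
      omega
  · have hx2' : pos p q < pos p x := by
      have := pos_ne_zero (Ne.symm hxp0)
      omega
    have hxq : x ≠ q := fun h => by rw [h] at hx2'; omega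
    rw [vmul_other (Ne.symm hxp0) hxq]
    rcases eq_or_ne (v' x) p with hq | hq
    · rw [hq]
      exact p_inU2 hsc
    · have h4 := hA x p hx1.symm hxp0
      have hne0 : 0 < pos p (v' x) := pos_ne_zero hq
      have hsum2 : pos p x + pos x p = n := by
        have := pos_cases p x p
        rw [pos_self] at this
        have b1 := pos_ne_zero (Ne.symm hxp0)
        have b2 := pos_ne_zero hxp0
        omega
      have d2 := pos_cases p x (v' x)
      have b1 := pos_lt p (v' x)
      have b3 := pos_lt x (v' x)
      refine ⟨hx1.trans ⟨1, by simp⟩, ?_⟩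
      omega

lemma split_U1_cycle (hpq : p ≠ q) (hsc : v'.SameCycle p q) (hA : Aligned v') :
    ∀ x, inU1 v' p q x → (v' * Equiv.swap p q).SameCycle x q := by
  set v := v' * Equiv.swap p q with hv
  have key : ∀ d x, inU1 v' p q x → pos x q = d → v.SameCycle x q := by
    intro d
    induction d using Nat.strong_induction_on with
    | _ d ih =>
      intro x hx hd
      rcases eq_or_ne q x with rfl | hxq0
      · exact Equiv.Perm.SameCycle.refl v q
      · obtain ⟨hx1, hx2, hx3⟩ := hx
        have hxp : x ≠ p := fun h => by rw [h, pos_self] at hx2; omega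
        have hvx : v x = v' x := vmul_other hxp (Ne.symm hxq0)
        rcases eq_or_ne (v' x) q with hq | hq
        · exact ⟨1, by simp [hvx, hq]⟩
        · have hx' : inU1 v' p q (v' x) := by
            have := split_U1_inv hpq hsc hA x ⟨hx1, hx2, hx3⟩
            rwa [hvx] at this
          have h4 := hA x q (hx1.symm.trans hsc) hxq0
          have d1 := pos_cases x (v' x) q
          have b1 := pos_lt x (v' x)
          have b2 := pos_lt (v' x) q
          have b3 := pos_lt x q
          have hlt : pos (v' x) q < pos x q := by omega
          have hstep : v.SameCycle x (v' x) := ⟨1, by simp [hvx]⟩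
          exact hstep.trans (ih _ (hd ▸ hlt) (v' x) hx' rfl)
  intro x hx
  exact key (pos x q) x hx rfl

lemma split_U2_cycle (hpq : p ≠ q) (hsc : v'.SameCycle p q) (hA : Aligned v') :
    ∀ x, inU2 v' p q x → (v' * Equiv.swap p q).SameCycle x p := by
  set v := v' * Equiv.swap p q with hv
  have key : ∀ d x, inU2 v' p q x → pos x p = d → v.SameCycle x p := by
    intro d
    induction d using Nat.strong_induction_on with
    | _ d ih =>
      intro x hx hd
      rcases eq_or_ne p x with rfl | hxp0
      · exact Equiv.Perm.SameCycle.refl v p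
      · obtain ⟨hx1, hx2⟩ := hx
        have hx2' : pos p q < pos p x := by
          have := pos_ne_zero (Ne.symm hxp0)
          omega
        have hxq : x ≠ q := fun h => by rw [h] at hx2'; omega
        have hvx : v x = v' x := vmul_other (Ne.symm hxp0) hxq
        rcases eq_or_ne (v' x) p with hq | hq
        · exact ⟨1, by simp [hvx, hq]⟩
        · have hx' : inU2 v' p q (v' x) := by
            have := split_U2_inv hpq hsc hA x ⟨hx1, hx2⟩
            rwa [hvx] at this
          have h4 := hA x p hx1.symm hxp0
          have d1 := pos_cases x (v' x) p
          have b1 := pos_lt x (v' x)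
          have b2 := pos_lt (v' x) p
          have b3 := pos_lt x p
          have hlt : pos (v' x) p < pos x p := by omega
          have hstep : v.SameCycle x (v' x) := ⟨1, by simp [hvx]⟩
          exact hstep.trans (ih _ (hd ▸ hlt) (v' x) hx' rfl)
  intro x hx
  exact key (pos x p) x hx rfl

lemma split_untouched (hsc : v'.SameCycle p q) {x y : Fin n} (hpx : ¬ v'.SameCycle p x)
    (hxy : v'.SameCycle x y) : (v' * Equiv.swap p q).SameCycle x y := by
  set v := v' * Equiv.swap p q with hv
  have aux : ∀ k : ℕ, (v ^ k) x = (v' ^ k) x := by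
    intro k
    induction k with
    | zero => rfl
    | succ k ih =>
      have h1 : (v ^ (k+1)) x = v ((v ^ k) x) := by rw [pow_succ']; rfl
      have h2 : (v' ^ (k+1)) x = v' ((v' ^ k) x) := by rw [pow_succ']; rfl
      rw [h1, h2, ih]
      set z := (v' ^ k) x with hz
      have hxz : v'.SameCycle x z := ⟨(k : ℤ), by rw [zpow_natCast]⟩
      have hzp : z ≠ p := fun h => hpx (by rw [← h]; exact hxz.symm)
      have hzq : z ≠ q := fun h => hpx (hsc.trans (by rw [← h]; exact hxz.symm))
      exact vmul_other hzp hzq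
  obtain ⟨k, _, _, hk⟩ := hxy.exists_pow_eq''
  exact ⟨(k : ℤ), by rw [zpow_natCast, aux k, hk]⟩

lemma split_decomp (hpq : p ≠ q) (hsc : v'.SameCycle p q) (hA : Aligned v')
    {x y : Fin n} (hxy : (v' * Equiv.swap p q).SameCycle x y) :
    (inU1 v' p q x ∧ inU1 v' p q y) ∨ (inU2 v' p q x ∧ inU2 v' p q y) ∨
    (¬ v'.SameCycle p x ∧ v'.SameCycle x y) := by
  by_cases hpx : v'.SameCycle p x
  · by_cases h1 : 0 < pos p x ∧ pos p x ≤ pos p q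
    · left
      have hx : inU1 v' p q x := ⟨hpx, h1.1, h1.2⟩
      exact ⟨hx, invariant_orbit (split_U1_inv hpq hsc hA) hx hxy⟩
    · right; left
      have hx : inU2 v' p q x := ⟨hpx, h1⟩
      exact ⟨hx, invariant_orbit (split_U2_inv hpq hsc hA) hx hxy⟩
  · right; right
    exact ⟨hpx, split_refines hsc hxy⟩

lemma split_aligned (hpq : p ≠ q) (hsc : v'.SameCycle p q) (hA : Aligned v') :
    Aligned (v' * Equiv.swap p q) := by
  set v := v' * Equiv.swap p q with hv
  intro x y hxy hyx
  rcases eq_or_ne q x with rfl | hxq0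
  · -- x = q
    have hyU1 : inU1 v' p q y := invariant_orbit (split_U1_inv hpq hsc hA) (q_inU1 hpq hsc) hxy
    rcases eq_or_ne (v' p) q with hvpq | hvpq
    · exfalso
      have hfix : v q = q := by rw [vmul_q, hvpq]
      exact hyx (hxy.eq_of_left hfix).symm
    · rw [vmul_q]
      obtain ⟨hy1, hy2, hy3⟩ := hyU1
      have hy3' : pos p y < pos p q := by
        rcases eq_or_ne (pos p y) (pos p q) with h | h
        · exact absurd (pos_inj h) hyx
        · omega
      have h4 := hA p y hy1 (fun h => by rw [h, pos_self] at hy2; omega)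
      have hsum : pos p q + pos q p = n := by
        have := pos_cases p q p
        rw [pos_self] at this
        have := pos_ne_zero hpq.symm
        have := pos_ne_zero hpq
        omega
      have d1 := pos_cases q p (v' p)
      have d2 := pos_cases q p y
      have b1 := pos_lt q (v' p)
      have b2 := pos_lt q y
      have b3 := pos_lt p (v' p)
      have b4 := pos_lt p y
      have hne0 : 0 < pos q (v' p) := pos_ne_zero hvpq
      constructor <;> omega
  · rcases eq_or_ne p x with rfl | hxp0
    · -- x = p
      have hyU2 : inU2 v' p q y := invariant_orbit (split_U2_inv hpq hsc hA) (p_inU2 hsc) hxy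
      rcases eq_or_ne (v' q) p with hvqp | hvqp
      · exfalso
        have hfix : v p = p := by rw [vmul_p, hvqp]
        exact hyx (hxy.eq_of_left hfix).symm
      · rw [vmul_p]
        obtain ⟨hy1, hy2⟩ := hyU2
        have hyq : pos p q < pos p y := by
          have := pos_ne_zero hyx
          omega
        have hyqne : y ≠ q := fun h => by rw [h] at hyq; omega
        have h4 := hA q y (hsc.symm.trans hy1) hyqne
        have h5 := hA q p hsc.symm hpq
        have hsum : pos p q + pos q p = n := by
          have := pos_cases p q p
          rw [pos_self] at this
          have := pos_ne_zero hpq.symm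
          have := pos_ne_zero hpq
          omega
        have d1 := pos_cases p q (v' q)
        have d2 := pos_cases p q y
        have b1 := pos_lt p (v' q)
        have b2 := pos_lt q y
        have b3 := pos_lt q (v' q)
        have b4 := pos_lt p y
        have hne0 : 0 < pos p (v' q) := pos_ne_zero hvqp
        constructor <;> omega
    · -- generic x
      have hvx : v x = v' x := vmul_other (Ne.symm hxp0) (Ne.symm hxq0)
      have h4 := hA x y (split_refines hsc hxy) hyx
      rw [hvx]
      exact h4

lemma split_noncross (hpq : p ≠ q) (hsc : v'.SameCycle p q) (hA : Aligned v')
    (hN : Noncross v') : Noncross (v' * Equiv.swap p q) := by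
  set v := v' * Equiv.swap p q with hv
  intro a b x y hab hxy hp1 hp2 hp3
  have h'ab := split_refines hsc hab
  have h'xy := split_refines hsc hxy
  have hax' : v'.SameCycle a x := hN a b x y h'ab h'xy hp1 hp2 hp3
  by_cases hpa : v'.SameCycle p a
  · have hpx : v'.SameCycle p x := hpa.trans hax'
    by_cases ha1 : 0 < pos p a ∧ pos p a ≤ pos p q
    · -- a ∈ U1
      have haU : inU1 v' p q a := ⟨hpa, ha1.1, ha1.2⟩
      have hbU : inU1 v' p q b := invariant_orbit (split_U1_inv hpq hsc hA) haU hab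
      by_cases hx1 : 0 < pos p x ∧ pos p x ≤ pos p q
      · exact (split_U1_cycle hpq hsc hA a haU).trans (split_U1_cycle hpq hsc hA x ⟨hpx, hx1.1, hx1.2⟩).symm
      · exfalso
        have hxU : inU2 v' p q x := ⟨hpx, hx1⟩
        have hyU : inU2 v' p q y := invariant_orbit (split_U2_inv hpq hsc hA) hxU hxy
        obtain ⟨_, hx2⟩ := hxU
        obtain ⟨hpy, hy2⟩ := hyU
        obtain ⟨_, hb1, hb2⟩ := hbU
        have d1 := pos_cases p a x
        have d2 := pos_cases p a b
        have d3 := pos_cases p a y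
        have b1 := pos_lt p a
        have b2 := pos_lt p b
        have b3 := pos_lt p x
        have b4 := pos_lt p y
        have b5 := pos_lt p q
        have b6 := pos_lt a x
        have b7 := pos_lt a b
        have b8 := pos_lt a y
        omega
    · -- a ∈ U2
      have haU : inU2 v' p q a := ⟨hpa, ha1⟩
      have hbU : inU2 v' p q b := invariant_orbit (split_U2_inv hpq hsc hA) haU hab
      by_cases hx1 : 0 < pos p x ∧ pos p x ≤ pos p q
      · exfalso
        have hxU : inU1 v' p q x := ⟨hpx, hx1.1, hx1.2⟩
        have hyU : inU1 v' p q y := invariant_orbit (split_U1_inv hpq hsc hA) hxU hxy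
        obtain ⟨_, hx2, hx3⟩ := hxU
        obtain ⟨hpy, hy2, hy3⟩ := hyU
        obtain ⟨_, hb1⟩ := hbU
        obtain ⟨_, ha2⟩ := haU
        have d1 := pos_cases p a x
        have d2 := pos_cases p a b
        have d3 := pos_cases p a y
        have b1 := pos_lt p a
        have b2 := pos_lt p b
        have b3 := pos_lt p x
        have b4 := pos_lt p y
        have b5 := pos_lt p q
        have b6 := pos_lt a x
        have b7 := pos_lt a b
        have b8 := pos_lt a y
        omega
      · exact (split_U2_cycle hpq hsc hA a haU).trans (split_U2_cycle hpq hsc hA x ⟨hpx, hx1⟩).symm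
  · have hpx : ¬ v'.SameCycle p x := fun h => hpa (h.trans hax'.symm)
    exact split_untouched hsc hpa hax'

end Structure


section S1
variable {n : ℕ} [NeZero n]
open Equiv Equiv.Perm

lemma finRotate_apply' (hn : 2 ≤ n) (x : Fin n) : finRotate n x = x + 1 := by
  obtain ⟨m, rfl⟩ : ∃ m, n = m + 1 := ⟨n - 1, by omega⟩
  exact finRotate_succ_apply x

open Fin.NatCast in
lemma finRotate_pow (hn : 2 ≤ n) (k : ℕ) (x : Fin n) :
    ((finRotate n) ^ k) x = x + (k : Fin n) := by
  induction k with
  | zero => simp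
  | succ k ih =>
    have h1 : ((finRotate n) ^ (k+1)) x = finRotate n (((finRotate n) ^ k) x) := by
      rw [pow_succ']; rfl
    rw [h1, ih, finRotate_apply' hn]
    rw [Nat.cast_add, Nat.cast_one, add_assoc]

open Fin.NatCast in
lemma sameCycle_finRotate (hn : 2 ≤ n) (x y : Fin n) : (finRotate n).SameCycle x y := by
  refine ⟨((pos x y : ℕ) : ℤ), ?_⟩
  rw [zpow_natCast, finRotate_pow hn]
  show x + ((((y - x : Fin n)).val : ℕ) : Fin n) = y
  rw [Fin.cast_val_eq_self]
  exact add_sub_cancel x y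

lemma orb_finRotate (hn : 2 ≤ n) : orb (finRotate n) = 1 := by
  haveI : Subsingleton (Quotient (Equiv.Perm.SameCycle.setoid (finRotate n))) :=
    ⟨fun q1 q2 => by
      induction q1 using Quotient.ind with | _ x =>
      induction q2 using Quotient.ind with | _ y =>
      exact Quotient.sound (sameCycle_finRotate hn x y)⟩
  haveI : Nonempty (Quotient (Equiv.Perm.SameCycle.setoid (finRotate n))) :=
    ⟨Quotient.mk _ ⟨0, by omega⟩⟩
  exact Nat.card_unique

lemma lenT_finRotate (hn : 2 ≤ n) : lenT (ST n) (finRotate n) + 1 = n := by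
  have := lenT_orb (finRotate n)
  rwa [orb_finRotate hn] at this

lemma aligned_finRotate (hn : 2 ≤ n) : Aligned (finRotate n) := by
  intro x y _ hyx
  have h1 : finRotate n x = x + 1 := finRotate_apply' hn x
  have h2 : pos x (x + 1) = 1 := by
    show ((x + 1 - x : Fin n)).val = 1
    have he : (x + 1 - x : Fin n) = 1 := add_sub_cancel_left x 1
    rw [he]
    obtain ⟨m, rfl⟩ : ∃ m, n = m + 2 := ⟨n - 2, by omega⟩
    exact Fin.val_one _
  rw [h1, h2]
  exact ⟨by omega, pos_ne_zero hyx⟩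

lemma noncross_finRotate (hn : 2 ≤ n) : Noncross (finRotate n) := by
  intro a b x y _ _ _ _ _
  exact sameCycle_finRotate hn a x

lemma aligned_noncross_of_absLe (hn : 2 ≤ n) :
    ∀ v : Perm (Fin n), absLe (ST n) v (finRotate n) → Aligned v ∧ Noncross v := by
  have main : ∀ k (v : Perm (Fin n)), orb v = k → absLe (ST n) v (finRotate n) →
      Aligned v ∧ Noncross v := by
    intro k
    induction k using Nat.strong_induction_on with
    | _ k ih =>
      intro v hk hvc
      rcases eq_or_ne v (finRotate n) with rfl | hvne
      · exact ⟨aligned_finRotate hn, noncross_finRotate hn⟩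
      · have hlc := lenT_finRotate hn
        have hlv := lenT_orb v
        have hne1 : v⁻¹ * finRotate n ≠ 1 := by
          intro h
          apply hvne
          have : v * (v⁻¹ * finRotate n) = v * 1 := by rw [h]
          rw [mul_one] at this
          rw [← this]
          group
        obtain ⟨l, hl1, hl2, hl3⟩ := exists_minimal_word (v⁻¹ * finRotate n)
        have hlnil : l ≠ [] := by
          intro h
          rw [h] at hl3
          exact hne1 (by rw [← hl3]; rfl)
        obtain ⟨τ, r, rfl⟩ := List.exists_cons_of_ne_nil hlnil
        obtain ⟨a, b, hab, hτ⟩ := hl1 τ List.mem_cons_self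
        set v2 := v * τ with hv2
        have hrlen : lenT (ST n) (v2⁻¹ * finRotate n) ≤ r.length := by
          have heq : v2⁻¹ * finRotate n = r.prod := by
            rw [hv2, mul_inv_rev, mul_assoc, hτ, Equiv.swap_inv]
            have : v⁻¹ * finRotate n = Equiv.swap a b * r.prod := by
              rw [← List.prod_cons, ← hτ, hl3]
            rw [this, Equiv.swap_mul_self_mul]
          rw [heq]
          exact lenT_le_length (fun σ hσ => hl1 σ (List.mem_cons_of_mem τ hσ)) rfl
        have hv2le : lenT (ST n) v2 ≤ lenT (ST n) v + 1 := by
          have := lenT_triangle v τ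
          rw [hτ, lenT_swap hab] at this
          rw [hv2, hτ]
          exact this
        have htri : lenT (ST n) (finRotate n) ≤
            lenT (ST n) v2 + lenT (ST n) (v2⁻¹ * finRotate n) := by
          have := lenT_triangle v2 (v2⁻¹ * finRotate n)
          rwa [show v2 * (v2⁻¹ * finRotate n) = finRotate n by group] at this
        have hvabs : lenT (ST n) (finRotate n)
            = lenT (ST n) v + lenT (ST n) (v⁻¹ * finRotate n) := hvc
        have hllen : lenT (ST n) (v⁻¹ * finRotate n) = r.length + 1 := by
          rw [← hl2]; simp
        have hv2len : lenT (ST n) v2 = lenT (ST n) v + 1 := by omega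
        have habs2 : absLe (ST n) v2 (finRotate n) := by
          unfold absLe
          omega
        have hlv2 := lenT_orb v2
        have horb2 : orb v2 + 1 = orb v := by omega
        obtain ⟨hA2, hN2⟩ := ih (orb v2) (by omega) v2 rfl habs2
        have hvv : v2 * Equiv.swap a b = v := by
          rw [hv2, hτ, mul_assoc, Equiv.swap_mul_self, mul_one]
        have hsc : v2.SameCycle a b := by
          by_contra hnsc
          have h5 := orb_swap_mul_of_not hab hnsc
          have h6 := orb_mul_swap_eq_orb_swap_mul v2 a b
          rw [hvv] at h6
          omega
        constructor
        · rw [← hvv]; exact split_aligned hab hsc hA2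
        · rw [← hvv]; exact split_noncross hab hsc hA2 hN2
  exact fun v h => main (orb v) v rfl h

end S1


section S2
variable {n : ℕ}
open Equiv Equiv.Perm

lemma absLe_of_refines (hn : 2 ≤ n) :
    ∀ v u : Perm (Fin n), absLe (ST n) v (finRotate n) → absLe (ST n) u (finRotate n) →
      (∀ x y, v.SameCycle x y → u.SameCycle x y) → absLe (ST n) v u := by
  haveI : NeZero n := ⟨by omega⟩
  have main : ∀ k (v u : Perm (Fin n)), lenT (ST n) v = k →
      absLe (ST n) v (finRotate n) → absLe (ST n) u (finRotate n) →
      (∀ x y, v.SameCycle x y → u.SameCycle x y) → absLe (ST n) v u := by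
    intro k
    induction k using Nat.strong_induction_on with
    | _ k ih =>
      intro v u hk hvc huc href
      rcases eq_or_ne v 1 with rfl | hv1
      · exact absLe_one u
      · obtain ⟨a, ha⟩ : ∃ a, v a ≠ a := by
          by_contra hall
          push_neg at hall
          exact hv1 (Equiv.ext fun x => by simp [hall x])
        set b := v a with hb
        have hab : a ≠ b := Ne.symm ha
        have hscv : v.SameCycle a b := ⟨1, by simp [hb]⟩
        have hscu : u.SameCycle a b := href a b hscv
        set v2 := v * Equiv.swap a b with hv2
        set u2 := u * Equiv.swap a b with hu2
        -- orbit counts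
        have hov2 : orb v2 = orb v + 1 := by
          rw [hv2, orb_mul_swap_eq_orb_swap_mul]
          exact (orb_swap_mul_sameCycle hab hscv).1
        have hou2 : orb u2 = orb u + 1 := by
          rw [hu2, orb_mul_swap_eq_orb_swap_mul]
          exact (orb_swap_mul_sameCycle hab hscu).1
        have e1 := lenT_orb v
        have e2 := lenT_orb v2
        have e3 := lenT_orb u
        have e4 := lenT_orb u2
        have hbv : orb v ≤ n := orb_le v
        have hbu : orb u ≤ n := orb_le u
        have hlv2 : lenT (ST n) v = lenT (ST n) v2 + 1 := by omega
        have hlu2 : lenT (ST n) u = lenT (ST n) u2 + 1 := by omega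
        have habsv2 : absLe (ST n) v2 v := absLe_mul_swap_left hab hlv2
        have habsu2 : absLe (ST n) u2 u := absLe_mul_swap_left hab hlu2
        have hv2c : absLe (ST n) v2 (finRotate n) := absLe_trans habsv2 hvc
        have hu2c : absLe (ST n) u2 (finRotate n) := absLe_trans habsu2 huc
        obtain ⟨hAv, hNv⟩ := aligned_noncross_of_absLe hn v hvc
        obtain ⟨hAu, hNu⟩ := aligned_noncross_of_absLe hn u huc
        -- refinement of v2-cycles into u2-cycles
        have href2 : ∀ x y, v2.SameCycle x y → u2.SameCycle x y := by
          intro x y hxy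
          rcases split_decomp hab hscv hAv hxy with ⟨hx, hy⟩ | ⟨hx, hy⟩ | ⟨hvax, hvxy⟩
          · -- both equal b
            have hxb : x = b := by
              obtain ⟨hx1, hx2, hx3⟩ := hx
              have h4 := hAv a x hx1 (fun h => by rw [h, pos_self] at hx2; omega)
              rw [← hb] at h4
              exact pos_inj (le_antisymm hx3 h4.2)
            have hyb : y = b := by
              obtain ⟨hy1, hy2, hy3⟩ := hy
              have h4 := hAv a y hy1 (fun h => by rw [h, pos_self] at hy2; omega)
              rw [← hb] at h4
              exact pos_inj (le_antisymm hy3 h4.2)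
            rw [hxb, hyb]
          · -- both in U2
            have hx' : inU2 u a b x := ⟨href a x hx.1, hx.2⟩
            have hy' : inU2 u a b y := ⟨href a y hy.1, hy.2⟩
            exact (split_U2_cycle hab hscu hAu x hx').trans
              (split_U2_cycle hab hscu hAu y hy').symm
          · by_cases hux : u.SameCycle a x
            · have huy : u.SameCycle a y := hux.trans (href x y hvxy)
              have hxb : x ≠ b := fun h => hvax (h ▸ hscv)
              have hyb : y ≠ b := fun h => hvax (by rw [h] at hvxy; exact hscv.trans hvxy.symm)
              have hxa : x ≠ a := fun h => hvax (h ▸ Equiv.Perm.SameCycle.refl v a)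
              have hya : y ≠ a := fun h => hvax (by rw [h] at hvxy; exact hvxy.symm)
              by_cases hx1 : 0 < pos a x ∧ pos a x ≤ pos a b
              · by_cases hy1 : 0 < pos a y ∧ pos a y ≤ pos a b
                · exact (split_U1_cycle hab hscu hAu x ⟨hux, hx1.1, hx1.2⟩).trans
                    (split_U1_cycle hab hscu hAu y ⟨huy, hy1.1, hy1.2⟩).symm
                · exfalso
                  have hxlt : pos a x < pos a b :=
                    lt_of_le_of_ne hx1.2 (fun h => hxb (pos_inj h))
                  have hygt : pos a b < pos a y := by
                    have h0 : 0 < pos a y := pos_ne_zero hya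
                    omega
                  exact hvax (hNv a b x y hscv hvxy hx1.1 hxlt hygt)
              · by_cases hy1 : 0 < pos a y ∧ pos a y ≤ pos a b
                · exfalso
                  have hylt : pos a y < pos a b :=
                    lt_of_le_of_ne hy1.2 (fun h => hyb (pos_inj h))
                  have hxgt : pos a b < pos a x := by
                    have h0 : 0 < pos a x := pos_ne_zero hxa
                    omega
                  have := hNv a b y x hscv hvxy.symm hy1.1 hylt hxgt
                  exact hvax (this.trans hvxy.symm)
                · exact (split_U2_cycle hab hscu hAu x ⟨hux, hx1⟩).trans
                    (split_U2_cycle hab hscu hAu y ⟨huy, hy1⟩).symm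
            · exact split_untouched hscu hux (href x y hvxy)
        have habs2 : absLe (ST n) v2 u2 :=
          ih (lenT (ST n) v2) (by omega) v2 u2 rfl hv2c hu2c href2
        -- conclude
        have hconj : lenT (ST n) (v2⁻¹ * u2) = lenT (ST n) (v⁻¹ * u) := by
          have heq : v2⁻¹ * u2 = (Equiv.swap a b)⁻¹ * (v⁻¹ * u) * ((Equiv.swap a b)⁻¹)⁻¹ := by
            rw [hv2, hu2, mul_inv_rev]
            group
          rw [heq, lenT_conj]
        unfold absLe at habs2 ⊢
        rw [hconj] at habs2
        omega
  exact fun v u h1 h2 h3 => main (lenT (ST n) v) v u rfl h1 h2 h3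

end S2


section TakeLemma

lemma filter_eq_take {α : Type*} : ∀ (l : List α) (k : ℕ) (p : α → Bool),
    (∀ (i : ℕ) (h : i < l.length), (p l[i] = true ↔ i < k)) → l.filter p = l.take k := by
  intro l
  induction l with
  | nil => intro k p _; simp
  | cons a l' ih =>
    intro k p hp
    have h0 := hp 0 (by simp)
    simp only [List.getElem_cons_zero] at h0
    cases k with
    | zero =>
      have ha : p a = false := by
        rcases Bool.eq_false_or_eq_true (p a) with h | h
        · exact absurd (h0.mp h) (by omega)
        · exact h
      rw [List.take_zero, List.filter_cons, ha]
      simp only [Bool.false_eq_true, if_false]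
      rw [List.filter_eq_nil_iff]
      intro x hx
      obtain ⟨i, hi, rfl⟩ := List.mem_iff_getElem.mp hx
      intro hpx
      have := hp (i+1) (by simpa using Nat.succ_lt_succ hi)
      simp only [List.getElem_cons_succ] at this
      exact absurd (this.mp hpx) (by omega)
    | succ k =>
      have ha : p a = true := h0.mpr (Nat.succ_pos k)
      rw [List.filter_cons, ha]
      simp only [if_true]
      rw [List.take_succ_cons]
      congr 1
      apply ih
      intro i hi
      have := hp (i+1) (by simpa using Nat.succ_lt_succ hi)
      simpa using this

end TakeLemma

-- INSERT_HERE

end NCPaper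

namespace NCPaper

variable {G : Type*} [Group G]

/-- `IsJoinIn T S A w`: `w` is the least upper bound of the set `A` inside the subposet
`S` of the group, with respect to the absolute order determined by `T`. -/
def IsJoinIn (T : Set G) (S : Set G) (A : Set G) (w : G) : Prop :=
  w ∈ S ∧ (∀ a ∈ A, absLe T a w) ∧ ∀ u ∈ S, (∀ a ∈ A, absLe T a u) → absLe T w u

/-- for any factorization of the long cycle into `n-1` transpositions,
joins of subsets of the factors exist in `NC(S_n)`, the assignment `I ↦ w_I` is an
injective order-preserving map with `w_∅ = 1`, `w_univ = c`, sending initial segments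
to partial products, and its image is order-isomorphic to the Boolean lattice of
subsets of an `(n-1)`-element set. -/
theorem boolean_sublattice_of_factorization (n : ℕ) (hn : 2 ≤ n)
    (t : Fin (n-1) → Equiv.Perm (Fin n)) (ht : ∀ i, (t i).IsSwap)
    (htc : (List.ofFn t).prod = finRotate n) :
    ∃ Wf : Set (Fin (n-1)) → Equiv.Perm (Fin n),
      (∀ I : Set (Fin (n-1)),
        IsJoinIn (ST n) (NC (ST n) (finRotate n)) (t '' I) (Wf I)) ∧
      Function.Injective Wf ∧
      (∀ I J : Set (Fin (n-1)), I ⊆ J → absLe (ST n) (Wf I) (Wf J)) ∧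
      Wf ∅ = 1 ∧ Wf Set.univ = finRotate n ∧
      (∀ k : ℕ, 1 ≤ k → k ≤ n-1 →
        Wf {i : Fin (n-1) | i.val < k} = ((List.ofFn t).take k).prod) ∧
      Nonempty (RelIso (fun a b : Set.range Wf => absLe (ST n) a.1 b.1)
        (fun A B : Set (Fin (n-1)) => A ⊆ B)) := by
  classical
  haveI : NeZero n := ⟨by omega⟩
  let sel : Set (Fin (n-1)) → List (Fin (n-1)) :=
    fun I => (List.finRange (n-1)).filter (fun i => decide (i ∈ I))
  let Wf : Set (Fin (n-1)) → Equiv.Perm (Fin n) := fun I => ((sel I).map t).prod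
  have hL : ∀ τ ∈ List.ofFn t, τ ∈ ST n := by
    intro τ hτ
    rw [List.mem_ofFn] at hτ
    obtain ⟨i, rfl⟩ := hτ
    exact ht i
  have hmaster : lenT (ST n) (List.ofFn t).prod = (List.ofFn t).length := by
    rw [htc, List.length_ofFn]
    have := lenT_finRotate hn
    omega
  have hWfmem : ∀ I, ∀ τ ∈ (sel I).map t, τ ∈ ST n := by
    intro I τ hτ
    rw [List.mem_map] at hτ
    obtain ⟨i, _, rfl⟩ := hτ
    exact ht i
  have hsub : ∀ I, ((sel I).map t).Sublist (List.ofFn t) := by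
    intro I
    rw [List.ofFn_eq_map]
    exact List.filter_sublist.map t
  have hkey : ∀ I, lenT (ST n) (Wf I) = (sel I).length ∧
      absLe (ST n) (Wf I) (finRotate n) := by
    intro I
    have h := sub_absLe hL hmaster (hsub I)
    rw [htc, List.length_map] at h
    exact h
  have hWfNC : ∀ I, Wf I ∈ NC (ST n) (finRotate n) := fun I => (hkey I).2
  have hselmem : ∀ (I : Set (Fin (n-1))) (i : Fin (n-1)), i ∈ sel I ↔ i ∈ I := by
    intro I i
    show i ∈ (List.finRange (n-1)).filter _ ↔ _
    rw [List.mem_filter]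
    simp [List.mem_finRange]
  have hmono : ∀ I J : Set (Fin (n-1)), I ⊆ J → absLe (ST n) (Wf I) (Wf J) := by
    intro I J hIJ
    have hs : (sel I).Sublist (sel J) := by
      apply List.monotone_filter_right
      intro a ha
      simp only [decide_eq_true_eq] at ha ⊢
      exact hIJ ha
    have hmas2 : lenT (ST n) ((sel J).map t).prod = ((sel J).map t).length := by
      rw [List.length_map]
      exact (hkey J).1
    exact (sub_absLe (hWfmem J) hmas2 (hs.map t)).2
  have hub : ∀ (I : Set (Fin (n-1))) (i : Fin (n-1)), i ∈ I → absLe (ST n) (t i) (Wf I) := by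
    intro I i hi
    have hmem : i ∈ sel I := (hselmem I i).mpr hi
    have hs : ([i].map t).Sublist ((sel I).map t) :=
      (List.singleton_sublist.mpr hmem).map t
    have hmas2 : lenT (ST n) ((sel I).map t).prod = ((sel I).map t).length := by
      rw [List.length_map]
      exact (hkey I).1
    have h := (sub_absLe (hWfmem I) hmas2 hs).2
    simpa using h
  have huniv : ∀ (I : Set (Fin (n-1))) u, u ∈ NC (ST n) (finRotate n) →
      (∀ i ∈ I, absLe (ST n) (t i) u) → absLe (ST n) (Wf I) u := by
    intro I u huNC hu
    apply absLe_of_refines hn _ u (hkey I).2 huNC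
    intro x y hxy
    refine sameCycle_prod_refines ?_ hxy
    intro τ hτ
    rw [List.mem_map] at hτ
    obtain ⟨i, hiin, rfl⟩ := hτ
    have hiI : i ∈ I := (hselmem I i).mp hiin
    obtain ⟨x₀, y₀, hxy₀, hswap⟩ := ht i
    refine ⟨x₀, y₀, hxy₀, hswap, ?_⟩
    have h := hu i hiI
    rw [hswap] at h
    exact (absLe_swap_iff hxy₀).mp h
  have hcollapse : ∀ I J : Set (Fin (n-1)), Wf I = Wf J → J ⊆ I := by
    intro I J heq i hiJ
    have h1 : absLe (ST n) (Wf (I ∪ J)) (Wf I) := by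
      apply huniv _ _ (hWfNC I)
      intro j hj
      rcases hj with hj | hj
      · exact hub I j hj
      · rw [heq]; exact hub J j hj
    have h2 : absLe (ST n) (Wf I) (Wf (I ∪ J)) := hmono _ _ Set.subset_union_left
    have h3 : Wf I = Wf (I ∪ J) := absLe_antisymm h2 h1
    have h4 : (sel I).length = (sel (I ∪ J)).length := by
      have k1 := (hkey I).1
      have k2 := (hkey (I ∪ J)).1
      rw [h3, k2] at k1
      omega
    have hs : (sel I).Sublist (sel (I ∪ J)) := by
      apply List.monotone_filter_right
      intro a ha
      simp only [decide_eq_true_eq] at ha ⊢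
      exact Or.inl ha
    have h5 : sel I = sel (I ∪ J) := hs.eq_of_length h4
    have h6 : i ∈ sel (I ∪ J) := (hselmem _ i).mpr (Or.inr hiJ)
    rw [← h5] at h6
    exact (hselmem I i).mp h6
  have hinj : Function.Injective Wf := fun I J h =>
    Set.Subset.antisymm (hcollapse J I h.symm) (hcollapse I J h)
  have hiff : ∀ A B : Set (Fin (n-1)), absLe (ST n) (Wf A) (Wf B) ↔ A ⊆ B := by
    intro A B
    constructor
    · intro habs
      have h1 : absLe (ST n) (Wf (A ∪ B)) (Wf B) := by
        apply huniv _ _ (hWfNC B)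
        intro j hj
        rcases hj with hj | hj
        · exact absLe_trans (hub A j hj) habs
        · exact hub B j hj
      have h2 : absLe (ST n) (Wf B) (Wf (A ∪ B)) := hmono _ _ Set.subset_union_right
      have h3 : Wf B = Wf (A ∪ B) := absLe_antisymm h2 h1
      have h4 := hcollapse B (A ∪ B) h3
      exact fun i hi => h4 (Or.inl hi)
    · exact hmono A B
  refine ⟨Wf, ?_, hinj, fun I J h => hmono I J h, ?_, ?_, ?_, ?_⟩
  · -- joins
    intro I
    refine ⟨hWfNC I, ?_, ?_⟩
    · rintro a ⟨i, hi, rfl⟩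
      exact hub I i hi
    · intro u hu hau
      exact huniv I u hu (fun i hi => hau (t i) ⟨i, hi, rfl⟩)
  · -- empty
    show ((sel ∅).map t).prod = 1
    have : sel ∅ = [] := by
      apply List.filter_eq_nil_iff.mpr
      intro a _
      simp
    rw [this]
    simp
  · -- univ
    show ((sel Set.univ).map t).prod = finRotate n
    have : sel Set.univ = List.finRange (n-1) := by
      apply List.filter_eq_self.mpr
      intro a _
      simp
    rw [this, ← List.ofFn_eq_map, htc]
  · -- initial segments
    intro k _ _
    show ((sel {i : Fin (n-1) | i.val < k}).map t).prod = ((List.ofFn t).take k).prod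
    have h1 : sel {i : Fin (n-1) | i.val < k} = (List.finRange (n-1)).take k := by
      apply filter_eq_take
      intro i h
      rw [List.getElem_finRange]
      simp only [decide_eq_true_eq]
      show (Fin.cast _ ⟨i, _⟩ : Fin (n-1)).val < k ↔ i < k
      simp
    rw [h1, List.ofFn_eq_map, ← List.map_take]
  · -- order iso
    have hbij : Function.Bijective (fun A : Set (Fin (n-1)) =>
        (⟨Wf A, ⟨A, rfl⟩⟩ : Set.range Wf)) := by
      constructor
      · intro A B h
        exact hinj (congrArg Subtype.val h)
      · rintro ⟨w, A, rfl⟩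
        exact ⟨A, rfl⟩
    let e : Set (Fin (n-1)) ≃ Set.range Wf := Equiv.ofBijective _ hbij
    refine ⟨⟨e.symm, ?_⟩⟩
    intro x y
    have hx : Wf (e.symm x) = x.1 := congrArg Subtype.val (e.apply_symm_apply x)
    have hy : Wf (e.symm y) = y.1 := congrArg Subtype.val (e.apply_symm_apply y)
    show e.symm x ⊆ e.symm y ↔ absLe (ST n) x.1 y.1
    rw [← hx, ← hy]
    exact (hiff _ _).symm

end NCPaper
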